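/- arXiv:1909.04717 — 2 statements merged into one kernel-verified Lean document; each statement's English description precedes it below -/
import Mathlib

section
/- Let S : ℝ → Set ℝ have nonempty values, with −S maximal monotone and range of S contained in [−M, M] for some M > 0. Then for every a ∈ ℝ and every ε > 0 there exists δ > 0 such that for all b ∈ ℝ with |a − b| < δ there exist μ ∈ S(a) and ν ∈ S(b) with |μ − ν| < ε. -/
/-- A set-valued map `T : ℝ → Set ℝ` is monotone. -/
def MonotoneSV (T : ℝ → Set ℝ) : Prop :=
  ∀ a b μ ν : ℝ, μ ∈ T a → ν ∈ T b → 0 ≤ (μ - ν) * (a - b)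

/-- A set-valued map is maximal monotone: monotone and its graph admits no proper
monotone extension. -/
def MaximalMonotoneSV (T : ℝ → Set ℝ) : Prop :=
  MonotoneSV T ∧ ∀ T' : ℝ → Set ℝ, MonotoneSV T' → (∀ a, T a ⊆ T' a) → ∀ a, T' a = T a

/-- `−S`, defined by `(−S)(a) = {−μ : μ ∈ S a}`. -/
def negSV (S : ℝ → Set ℝ) : ℝ → Set ℝ := fun a => (fun μ => -μ) '' S a

lemma sv_aux (T : ℝ → Set ℝ) (M : ℝ)
    (hne : ∀ a, (T a).Nonempty)
    (hmax : MaximalMonotoneSV T)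
    (hbdd : ∀ a, T a ⊆ Set.Icc (-M) M) :
    ∀ a : ℝ, ∀ ε > 0, ∃ δ > 0, ∀ b : ℝ, |a - b| < δ →
      ∃ μ ∈ T a, ∃ ν ∈ T b, |μ - ν| < ε := by
  intro a ε hε
  set A : Set ℝ := {x | ∃ b, a < b ∧ x ∈ T b} with hA
  set B : Set ℝ := {x | ∃ b, b < a ∧ x ∈ T b} with hB
  obtain ⟨xA, hxA⟩ := hne (a + 1)
  obtain ⟨xB, hxB⟩ := hne (a - 1)
  have hAne : A.Nonempty := ⟨xA, a + 1, by linarith, hxA⟩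
  have hBne : B.Nonempty := ⟨xB, a - 1, by linarith, hxB⟩
  have hAbdd : BddBelow A := ⟨-M, fun x ⟨b, _, hx⟩ => (hbdd b hx).1⟩
  have hBbdd : BddAbove B := ⟨M, fun x ⟨b, _, hx⟩ => (hbdd b hx).2⟩
  set l : ℝ := sInf A with hl
  set r : ℝ := sSup B with hr
  -- key inequalities
  have hkeyl : ∀ b ν, ν ∈ T b → 0 ≤ (l - ν) * (a - b) := by
    intro b ν hν
    rcases lt_trichotomy a b with h | h | h
    · have h1 : l ≤ ν := csInf_le hAbdd ⟨b, h, hν⟩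
      nlinarith
    · rw [h]; simp
    · have h1 : ν ≤ l := by
        apply le_csInf hAne
        rintro x ⟨b', hb', hx⟩
        have := hmax.1 b' b x ν hx hν
        nlinarith
      nlinarith
  have hkeyr : ∀ b ν, ν ∈ T b → 0 ≤ (r - ν) * (a - b) := by
    intro b ν hν
    rcases lt_trichotomy a b with h | h | h
    · have h1 : r ≤ ν := by
        apply csSup_le hBne
        rintro x ⟨b', hb', hx⟩
        have := hmax.1 b b' ν x hν hx
        nlinarith
      nlinarith
    · rw [h]; simp
    · have h1 : ν ≤ r := le_csSup hBbdd ⟨b, h, hν⟩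
      nlinarith
  -- extended map
  set T' : ℝ → Set ℝ := fun x => if x = a then insert l (insert r (T x)) else T x with hT'
  have hmem : ∀ x μ, μ ∈ T' x → (x = a ∧ (μ = l ∨ μ = r)) ∨ μ ∈ T x := by
    intro x μ hμ
    by_cases hx : x = a
    · simp only [hT', if_pos hx, Set.mem_insert_iff] at hμ
      rcases hμ with h | h | h
      · exact Or.inl ⟨hx, Or.inl h⟩
      · exact Or.inl ⟨hx, Or.inr h⟩
      · exact Or.inr h
    · simp only [hT', if_neg hx] at hμ
      exact Or.inr hμ
  have hmono : MonotoneSV T' := by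
    intro x y μ ν hμ hν
    rcases hmem x μ hμ with ⟨rfl, hμ'⟩ | hμ' <;> rcases hmem y ν hν with ⟨hy, hν'⟩ | hν'
    · rw [hy]; simp
    · rcases hμ' with rfl | rfl
      · exact hkeyl y ν hν'
      · exact hkeyr y ν hν'
    · rcases hν' with rfl | rfl
      · have := hkeyl x μ hμ'
        rw [hy]; nlinarith
      · have := hkeyr x μ hμ'
        rw [hy]; nlinarith
    · exact hmax.1 x y μ ν hμ' hν'
  have hsub : ∀ x, T x ⊆ T' x := by
    intro x
    by_cases hx : x = a
    · simp only [hT', if_pos hx]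
      exact fun z hz => Set.mem_insert_of_mem _ (Set.mem_insert_of_mem _ hz)
    · simp only [hT', if_neg hx]
      exact fun z hz => hz
  have heq := hmax.2 T' hmono hsub a
  have hlmem : l ∈ T a := by
    rw [← heq]; simp [hT']
  have hrmem : r ∈ T a := by
    rw [← heq]; simp [hT']
  -- choose delta
  obtain ⟨x₁, ⟨b₁, hb₁, hx₁T⟩, hx₁⟩ := exists_lt_of_csInf_lt hAne (by linarith : sInf A < l + ε)
  obtain ⟨x₂, ⟨b₂, hb₂, hx₂T⟩, hx₂⟩ := exists_lt_of_lt_csSup hBne (by linarith : r - ε < sSup B)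
  refine ⟨min (b₁ - a) (a - b₂), by simp [hb₁, hb₂, sub_pos], ?_⟩
  intro b hb
  rcases lt_trichotomy a b with h | h | h
  · -- b right of a, use l
    have hbb₁ : b < b₁ := by
      have h1 : b - a < b₁ - a := lt_of_le_of_lt (le_abs_self _ |>.trans_eq (abs_sub_comm a b ▸ rfl) |>.trans (le_refl _)) (lt_of_lt_of_le hb (min_le_left _ _))
      linarith
    obtain ⟨ν, hν⟩ := hne b
    refine ⟨l, hlmem, ν, hν, ?_⟩
    have h1 : l ≤ ν := csInf_le hAbdd ⟨b, h, hν⟩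
    have h2 : ν ≤ x₁ := by
      have := hmax.1 b₁ b x₁ ν hx₁T hν
      nlinarith
    rw [abs_sub_lt_iff]; constructor <;> linarith
  · exact ⟨l, hlmem, l, h ▸ hlmem, by simpa using hε⟩
  · -- b left of a, use r
    have hbb₂ : b₂ < b := by
      have h1 : a - b < a - b₂ := lt_of_lt_of_le hb (min_le_right _ _) |> fun h' => lt_of_le_of_lt (le_abs_self _) h'
      linarith
    obtain ⟨ν, hν⟩ := hne b
    refine ⟨r, hrmem, ν, hν, ?_⟩
    have h1 : ν ≤ r := le_csSup hBbdd ⟨b, h, hν⟩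
    have h2 : x₂ ≤ ν := by
      have := hmax.1 b b₂ ν x₂ hν hx₂T
      nlinarith
    rw [abs_sub_lt_iff]; constructor <;> linarith

/-- C2): for every `a` and `ε > 0` there is `δ > 0` such that for all `b` with
`|a − b| < δ` there are `μ ∈ S(a)`, `ν ∈ S(b)` with `|μ − ν| < ε`. -/
theorem sv_eps_delta (S : ℝ → Set ℝ) (M : ℝ) (hM : 0 < M)
    (hne : ∀ a, (S a).Nonempty)
    (hmax : MaximalMonotoneSV (negSV S))
    (hbdd : ∀ a, S a ⊆ Set.Icc (-M) M) :
    ∀ a : ℝ, ∀ ε > 0, ∃ δ > 0, ∀ b : ℝ, |a - b| < δ →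
      ∃ μ ∈ S a, ∃ ν ∈ S b, |μ - ν| < ε := by
  have hne' : ∀ a, (negSV S a).Nonempty := fun a => (hne a).image _
  have hbdd' : ∀ a, negSV S a ⊆ Set.Icc (-M) M := by
    rintro a t ⟨μ, hμ, rfl⟩
    obtain ⟨h1, h2⟩ := hbdd a hμ
    exact ⟨by simp; linarith, by simp; linarith⟩
  intro a ε hε
  obtain ⟨δ, hδ, h⟩ := sv_aux (negSV S) M hne' hmax hbdd' a ε hε
  refine ⟨δ, hδ, fun b hb => ?_⟩
  obtain ⟨μ, ⟨μ', hμ', rfl⟩, ν, ⟨ν', hν', rfl⟩, hlt⟩ := h b hb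
  refine ⟨μ', hμ', ν', hν', ?_⟩
  have : μ' - ν' = -(-μ' - -ν') := by ring
  rw [this, abs_neg]
  exact hlt
end

section
/- Let u : 𝕋ⁿ × [0,T) → ℝ satisfy: (i) u(·,0) is α-Hölder continuous with constant H₀; (ii) |u(x,t) − u(x,0)| ≤ M t^α for all x, t; and (iii) for all shifts e ∈ 𝕋ⁿ, h ∈ (0,T) and all (x,t) with t + h < T, |u(x,t) − u(x+e, t+h)| ≤ e^{λ t}(max_x |u(x,0) − u(x+e,h)| + c(|e|^α + h^α)) for constants λ, c > 0. Then u is α-Hölder continuous in space-time: |u(x,t) − u(y,s)| ≤ H_u(|x−y|^α + |t−s|^α) for some constant H_u depending only on H₀, M, λ, c, T. -/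
/-- Lemma 2.14 (Hölder continuity on the torus): if `u(·,0)` is `α`-Hölder with
constant `H₀`, `u` has `α`-growth in time with constant `M`, and `u` satisfies the
continuous-dependence shift estimate, then `u` is `α`-Hölder in space-time, with a
constant depending only on `H₀, M, λ, c, T`. -/
theorem holder_continuity_on_torus (n : ℕ) (α T H0 M lam c : ℝ)
    (hα : α ∈ Set.Ioc (0:ℝ) 1) (hT : 0 < T) (hH0 : 0 ≤ H0) (hM : 0 ≤ M)
    (hlam : 0 < lam) (hc : 0 < c) :
    ∃ Hu : ℝ, ∀ u : (Fin n → AddCircle (1:ℝ)) → ℝ → ℝ,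
      (∀ x y : Fin n → AddCircle (1:ℝ), |u x 0 - u y 0| ≤ H0 * dist x y ^ α) →
      (∀ x : Fin n → AddCircle (1:ℝ), ∀ t ∈ Set.Ico (0:ℝ) T,
        |u x t - u x 0| ≤ M * t ^ α) →
      (∀ (e : Fin n → AddCircle (1:ℝ)) (h : ℝ), 0 < h → h < T →
        ∀ A : ℝ, (∀ y, |u y 0 - u (y + e) h| ≤ A) →
        ∀ x : Fin n → AddCircle (1:ℝ), ∀ t ∈ Set.Ico (0:ℝ) T, t + h < T →
          |u x t - u (x + e) (t + h)| ≤
            Real.exp (lam * t) * (A + c * (dist e 0 ^ α + h ^ α))) →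
      ∀ x y : Fin n → AddCircle (1:ℝ), ∀ t ∈ Set.Ico (0:ℝ) T, ∀ s ∈ Set.Ico (0:ℝ) T,
        |u x t - u y s| ≤ Hu * (dist x y ^ α + |t - s| ^ α) := by
  obtain ⟨hα0, hα1⟩ := hα
  set E : ℝ := Real.exp (lam * T) * (H0 + 2 * M + 2 * c) with hE
  have hEpos : 0 < E := by positivity
  refine ⟨E, ?_⟩
  intro u h1 h2 h3
  have key : ∀ x y : Fin n → AddCircle (1:ℝ), ∀ t ∈ Set.Ico (0:ℝ) T,
      ∀ s ∈ Set.Ico (0:ℝ) T, t ≤ s →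
      |u x t - u y s| ≤ E * (dist x y ^ α + |t - s| ^ α) := by
    intro x y t ht s hs hts
    set e : (Fin n → AddCircle (1:ℝ)) := y - x with he
    have hxy : x + e = y := by simp [he]
    have hde : dist e 0 = dist x y := by
      rw [dist_zero_right, he, dist_eq_norm']
    have hdnn : (0:ℝ) ≤ dist x y ^ α := Real.rpow_nonneg dist_nonneg α
    -- uniform bound on the initial shifted difference
    have hA : ∀ h : ℝ, 0 ≤ h → h < T → ∀ z,
        |u z 0 - u (z + e) h| ≤ H0 * dist x y ^ α + M * h ^ α := by
      intro h hh0 hhT z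
      have b1 : |u z 0 - u (z + e) 0| ≤ H0 * dist x y ^ α := by
        have : dist z (z + e) = dist x y := by
          rw [← hde, dist_eq_norm]
          simp
        rw [← this]; exact h1 z (z + e)
      have b2 : |u (z + e) 0 - u (z + e) h| ≤ M * h ^ α := by
        rw [abs_sub_comm]; exact h2 (z + e) h ⟨hh0, hhT⟩
      calc |u z 0 - u (z + e) h|
          ≤ |u z 0 - u (z + e) 0| + |u (z + e) 0 - u (z + e) h| := abs_sub_le _ _ _
        _ ≤ H0 * dist x y ^ α + M * h ^ α := add_le_add b1 b2
    have hexp : Real.exp (lam * t) ≤ Real.exp (lam * T) :=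
      Real.exp_le_exp.mpr (by nlinarith [ht.2, hlam])
    rcases lt_or_eq_of_le hts with hlt | heq
    · -- t < s
      set h : ℝ := s - t with hh
      have hh0 : 0 < h := by simp [hh]; linarith
      have hhT : h < T := by simp [hh]; nlinarith [ht.1, hs.2]
      have hsum : t + h = s := by ring
      have main := h3 e h hh0 hhT (H0 * dist x y ^ α + M * h ^ α)
        (hA h hh0.le hhT) x t ht (by rw [hsum]; exact hs.2)
      rw [hsum, hxy] at main
      have hhnn : (0:ℝ) ≤ h ^ α := Real.rpow_nonneg hh0.le α
      have hts' : |t - s| = h := by rw [abs_sub_comm, abs_of_pos hh0]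
      rw [hde] at main
      rw [hts']
      calc |u x t - u y s|
          ≤ Real.exp (lam * t) * (H0 * dist x y ^ α + M * h ^ α
              + c * (dist x y ^ α + h ^ α)) := main
        _ ≤ Real.exp (lam * T) * ((H0 + 2 * M + 2 * c) * (dist x y ^ α + h ^ α)) := by
            apply mul_le_mul hexp ?_ (by positivity) (Real.exp_pos _).le
            nlinarith
        _ = E * (dist x y ^ α + h ^ α) := by rw [hE]; ring
    · -- t = s : limiting argument as h → 0⁺
      subst heq
      have hbase : |u x t - u y t| ≤ E * dist x y ^ α := by
        have hTt : 0 < T - t := by linarith [ht.2]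
        -- for each small h > 0 we have a bound
        have hbnd : ∀ h ∈ Set.Ioo (0:ℝ) (T - t),
            |u x t - u y t| ≤ Real.exp (lam * t) * ((H0 + c) * dist x y ^ α)
              + Real.exp (lam * t) * (2 * M + 2 * c) * h ^ α := by
          intro h hh
          obtain ⟨hh0, hhTt⟩ := hh
          have hhT : h < T := by linarith [ht.1]
          have hthT : t + h < T := by linarith
          have main := h3 e h hh0 hhT (H0 * dist x y ^ α + M * h ^ α)
            (hA h hh0.le hhT) x t ht hthT
          rw [hxy, hde] at main
          have hA0 : ∀ z, |u z 0 - u (z + (0 : Fin n → AddCircle (1:ℝ))) h| ≤ M * h ^ α := by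
            intro z
            rw [add_zero, abs_sub_comm]
            exact h2 z h ⟨hh0.le, hhT⟩
          have main2 := h3 0 h hh0 hhT (M * h ^ α) hA0 y t ht hthT
          rw [add_zero, dist_self, Real.zero_rpow hα0.ne', abs_sub_comm] at main2
          have tri : |u x t - u y t| ≤ |u x t - u y (t + h)| + |u y (t + h) - u y t| :=
            abs_sub_le _ _ _
          calc |u x t - u y t|
              ≤ |u x t - u y (t + h)| + |u y (t + h) - u y t| := tri
            _ ≤ Real.exp (lam * t) * (H0 * dist x y ^ α + M * h ^ α
                  + c * (dist x y ^ α + h ^ α))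
                + Real.exp (lam * t) * (M * h ^ α + c * (0 + h ^ α)) :=
                add_le_add main main2
            _ = Real.exp (lam * t) * ((H0 + c) * dist x y ^ α)
                + Real.exp (lam * t) * (2 * M + 2 * c) * h ^ α := by ring
        -- take the limit h → 0⁺
        have hlim : Filter.Tendsto
            (fun h : ℝ => Real.exp (lam * t) * ((H0 + c) * dist x y ^ α)
              + Real.exp (lam * t) * (2 * M + 2 * c) * h ^ α)
            (nhdsWithin 0 (Set.Ioi 0))
            (nhds (Real.exp (lam * t) * ((H0 + c) * dist x y ^ α))) := by
          have hr : Filter.Tendsto (fun h : ℝ => h ^ α) (nhdsWithin 0 (Set.Ioi 0))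
              (nhds 0) := by
            have := (Real.continuousAt_rpow_const 0 α (Or.inr hα0.le)).tendsto
            rw [Real.zero_rpow hα0.ne'] at this
            exact this.mono_left nhdsWithin_le_nhds
          have := (hr.const_mul (Real.exp (lam * t) * (2 * M + 2 * c))).const_add
            (Real.exp (lam * t) * ((H0 + c) * dist x y ^ α))
          simpa [mul_assoc] using this
        have hle : |u x t - u y t| ≤ Real.exp (lam * t) * ((H0 + c) * dist x y ^ α) := by
          refine ge_of_tendsto hlim ?_
          filter_upwards [Ioo_mem_nhdsGT_of_mem (Set.left_mem_Ico.mpr hTt)] with h hh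
          exact hbnd h hh
        calc |u x t - u y t|
            ≤ Real.exp (lam * t) * ((H0 + c) * dist x y ^ α) := hle
          _ ≤ E * dist x y ^ α := by
              rw [hE]
              have : Real.exp (lam * t) * (H0 + c) ≤
                  Real.exp (lam * T) * (H0 + 2 * M + 2 * c) := by
                apply mul_le_mul hexp (by linarith) (by linarith) (Real.exp_pos _).le
              nlinarith
      have : |t - t| ^ α = 0 := by
        rw [sub_self, abs_zero, Real.zero_rpow hα0.ne']
      rw [this]
      simpa using hbase
  intro x y t ht s hs
  rcases le_total t s with h | h
  · exact key x y t ht s hs h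
  · have hk := key y x s hs t ht h
    rw [abs_sub_comm, dist_comm, abs_sub_comm t s]
    exact hk
end
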